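/- Let X be a 2-valued group (n = 2) such that inv(a) = a for every a ∈ X, and let x ∈ X. Then for every natural number r ≥ 1, the sphere S*(x, r) has cardinality strictly less than 2r. -/

import Mathlib

/-- An `n`-valued group: multiplication takes values in `n`-element multisets. -/
structure NValuedGroup (n : ℕ) (X : Type*) where
  mul : X → X → Multiset X
  e : X
  inv : X → X
  one_le : 1 ≤ n
  card_mul : ∀ x y, (mul x y).card = n
  assoc : ∀ x y z, (mul x y).bind (fun t => mul t z) = (mul y z).bind (fun t => mul x t)
  e_mul : ∀ x, mul e x = Multiset.replicate n x
  mul_e : ∀ x, mul x e = Multiset.replicate n x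
  inv_mul : ∀ x, e ∈ mul (inv x) x
  mul_inv : ∀ x, e ∈ mul x (inv x)

variable {n : ℕ} {X : Type*}

/-- The multiset `x * s₁ * ⋯ * s_k` (iterated left-to-right, starting from `{x}`). -/
def NValuedGroup.wordProd (G : NValuedGroup n X) (x : X) (l : List X) : Multiset X :=
  l.foldl (fun m s => m.bind (fun t => G.mul t s)) {x}

/-- The ball `B_S(x, r)`: elements lying in `Set(x * s₁ * ⋯ * s_m)` for some `m ≤ r`,
`s₁, …, s_m ∈ S`. -/
def NValuedGroup.ball (G : NValuedGroup n X) (S : Set X) (x : X) (r : ℕ) : Set X :=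
  {y | ∃ l : List X, l.length ≤ r ∧ (∀ s ∈ l, s ∈ S) ∧ y ∈ G.wordProd x l}

/-- `S` generates `X`: every element lies in `Set(s₁ * ⋯ * s_m)` for some `m ≥ 1`,
`s₁, …, s_m ∈ S`. -/
def NValuedGroup.IsGenSet (G : NValuedGroup n X) (S : Set X) : Prop :=
  ∀ x : X, ∃ s₀ ∈ S, ∃ l : List X, (∀ s ∈ l, s ∈ S) ∧ x ∈ G.wordProd s₀ l

/-- `G.spow x i` is the multivalued power `x^{*(i+1)}`; so `x^{*r} = G.spow x (r-1)` for `r ≥ 1`. -/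
def NValuedGroup.spow (G : NValuedGroup n X) (x : X) : ℕ → Multiset X
  | 0 => {x}
  | r + 1 => (G.spow x r).bind (fun t => G.mul t x)

/-- `B*(x, r) = ⋃_{i=1}^{r} Set(x^{*i})`; in particular `B*(x, 0) = ∅`. -/
def NValuedGroup.Bstar (G : NValuedGroup n X) (x : X) (r : ℕ) : Set X :=
  {y | ∃ i < r, y ∈ G.spow x i}

/-- `S*(x, r) = B*(x, r) \ B*(x, r-1)`. -/
def NValuedGroup.Sstar (G : NValuedGroup n X) (x : X) (r : ℕ) : Set X :=
  G.Bstar x r \ G.Bstar x (r - 1)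

namespace NValuedGroup

lemma exists_pair (G : NValuedGroup 2 X) (hinv : ∀ a : X, G.inv a = a) (y : X) :
    ∃ w : X, G.mul y y = G.e ::ₘ {w} := by
  have he : G.e ∈ G.mul y y := by have := G.inv_mul y; rwa [hinv] at this
  obtain ⟨s, hs⟩ := Multiset.exists_cons_of_mem he
  have hcard : Multiset.card s = 1 := by
    have := G.card_mul y y
    rw [hs, Multiset.card_cons] at this
    omega
  obtain ⟨w, hw⟩ := Multiset.card_eq_one.mp hcard
  exact ⟨w, by rw [hs, hw]⟩

lemma key_identity (G : NValuedGroup 2 X) {y w : X} (hw : G.mul y y = G.e ::ₘ {w}) (p : X) :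
    (G.mul p y).bind (fun t => G.mul t y) = Multiset.replicate 2 p + G.mul p w := by
  rw [G.assoc p y y, hw, Multiset.cons_bind, Multiset.singleton_bind, G.mul_e]

/-- `useq G hinv x k` is `u_k`, where `u_0 = x` and `mul u_k u_k = {e, u_{k+1}}`. -/
noncomputable def useq (G : NValuedGroup 2 X) (hinv : ∀ a : X, G.inv a = a) (x : X) : ℕ → X
  | 0 => x
  | (k + 1) => Classical.choose (exists_pair G hinv (useq G hinv x k))

lemma useq_spec (G : NValuedGroup 2 X) (hinv : ∀ a : X, G.inv a = a) (x : X) (k : ℕ) :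
    G.mul (useq G hinv x k) (useq G hinv x k) = G.e ::ₘ {useq G hinv x (k + 1)} :=
  Classical.choose_spec (exists_pair G hinv (useq G hinv x k))

lemma mem_spow_two (G : NValuedGroup 2 X) (hinv : ∀ a : X, G.inv a = a) (x : X)
    (m : ℕ) (y : X) :
    y ∈ G.spow x (m + 2) ↔
      ∃ s ∈ G.spow x m, y = s ∨ y ∈ G.mul s (useq G hinv x 1) := by
  have hxx : G.mul x x = G.e ::ₘ {useq G hinv x 1} := useq_spec G hinv x 0
  constructor
  · intro h
    rw [spow, Multiset.mem_bind] at h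
    obtain ⟨t, ht, hy⟩ := h
    rw [spow, Multiset.mem_bind] at ht
    obtain ⟨s, hs, hts⟩ := ht
    have hmem : y ∈ (G.mul s x).bind (fun t => G.mul t x) :=
      Multiset.mem_bind.mpr ⟨t, hts, hy⟩
    rw [key_identity G hxx s] at hmem
    rcases Multiset.mem_add.mp hmem with h1 | h2
    · exact ⟨s, hs, Or.inl (Multiset.eq_of_mem_replicate h1)⟩
    · exact ⟨s, hs, Or.inr h2⟩
  · rintro ⟨s, hs, hy⟩
    have hmem : y ∈ (G.mul s x).bind (fun t => G.mul t x) := by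
      rw [key_identity G hxx s, Multiset.mem_add]
      rcases hy with rfl | hy
      · exact Or.inl (by simp [Multiset.mem_replicate])
      · exact Or.inr hy
    obtain ⟨t, ht, hy'⟩ := Multiset.mem_bind.mp hmem
    rw [spow, Multiset.mem_bind]
    exact ⟨t, by rw [spow, Multiset.mem_bind]; exact ⟨s, hs, ht⟩, hy'⟩

lemma mem_spow_mono (G : NValuedGroup 2 X) (hinv : ∀ a : X, G.inv a = a) (x : X)
    (m i : ℕ) {y : X} (h : y ∈ G.spow x m) : y ∈ G.spow x (m + 2 * i) := by
  induction i with
  | zero => simpa using h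
  | succ i ih =>
    have : m + 2 * (i + 1) = (m + 2 * i) + 2 := by ring
    rw [this, mem_spow_two G hinv x]
    exact ⟨y, ih, Or.inl rfl⟩

open scoped Classical in
/-- The frontier `F_m = Set(x^{*(m+1)}) \ Set(x^{*(m-1)})`. -/
noncomputable def Fr (G : NValuedGroup 2 X) (x : X) (m : ℕ) : Finset X :=
  (G.spow x m).toFinset \ (if 2 ≤ m then (G.spow x (m - 2)).toFinset else ∅)

lemma mem_Fr (G : NValuedGroup 2 X) (x : X) (m : ℕ) (y : X) :
    y ∈ Fr G x m ↔ y ∈ G.spow x m ∧ (2 ≤ m → y ∉ G.spow x (m - 2)) := by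
  classical
  unfold Fr
  split_ifs with h <;> simp [h]

lemma frontier_step (G : NValuedGroup 2 X) (hinv : ∀ a : X, G.inv a = a) (x : X) :
    ∀ k, 1 ≤ k → ∀ m, 2 ^ k ≤ m → ∀ y ∈ Fr G x m,
      ∃ s ∈ Fr G x (m - 2 ^ k), y ∈ G.mul s (useq G hinv x k) := by
  intro k
  induction k with
  | zero => omega
  | succ k ih =>
    intro _ m hm y hy
    rcases Nat.eq_zero_or_pos k with rfl | hk
    · -- base case k + 1 = 1
      rw [mem_Fr] at hy
      have hm2 : 2 ≤ m := by simpa using hm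
      obtain ⟨m', rfl⟩ : ∃ m', m = m' + 2 := ⟨m - 2, by omega⟩
      have h1 : y ∈ G.spow x (m' + 2) := hy.1
      rw [mem_spow_two G hinv x] at h1
      obtain ⟨s, hs, hys⟩ := h1
      have hne : y ∉ G.spow x m' := by
        have := hy.2 hm2
        simpa using this
      rcases hys with rfl | hys
      · exact absurd hs hne
      have hFr : s ∈ Fr G x m' := by
        rw [mem_Fr]
        refine ⟨hs, fun h2 hmem => hne ?_⟩
        have : m' - 2 + 2 = m' := by omega
        rw [← this]
        exact (mem_spow_two G hinv x (m' - 2) y).mpr ⟨s, hmem, Or.inr hys⟩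
      have hidx : m' + 2 - 2 ^ 1 = m' := by norm_num
      rw [hidx]
      exact ⟨s, hFr, hys⟩
    · -- inductive step: k ≥ 1
      have hk1 : 1 ≤ k := hk
      have hpow : 2 ^ (k + 1) = 2 ^ k + 2 ^ k := by rw [pow_succ]; ring
      have h2k : 1 ≤ 2 ^ k := Nat.one_le_two_pow
      have hm1 : 2 ^ k ≤ m := by omega
      obtain ⟨s, hsF, hys⟩ := ih hk1 m hm1 y hy
      have hm2 : 2 ^ k ≤ m - 2 ^ k := by omega
      obtain ⟨p, hpF, hsp⟩ := ih hk1 (m - 2 ^ k) hm2 s hsF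
      have hidx : m - 2 ^ k - 2 ^ k = m - 2 ^ (k + 1) := by omega
      rw [hidx] at hpF
      -- y ∈ mul s u_k with s ∈ mul p u_k, so y ∈ {p, p} + mul p u_{k+1}
      have hmem : y ∈ (G.mul p (useq G hinv x k)).bind (fun t => G.mul t (useq G hinv x k)) :=
        Multiset.mem_bind.mpr ⟨s, hsp, hys⟩
      rw [key_identity G (useq_spec G hinv x k) p] at hmem
      rcases Multiset.mem_add.mp hmem with h1 | h2
      · -- y = p is impossible: p is old, y is new
        exfalso
        have hyp : y = p := Multiset.eq_of_mem_replicate h1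
        have hpm : p ∈ G.spow x (m - 2 ^ (k + 1)) := ((mem_Fr G x _ p).mp hpF).1
        have hy2 : y ∉ G.spow x (m - 2) := by
          have := ((mem_Fr G x m y).mp hy).2 (by omega)
          exact this
        apply hy2
        have harith : (m - 2 ^ (k + 1)) + 2 * (2 ^ k - 1) = m - 2 := by omega
        rw [← harith]
        rw [hyp]
        exact mem_spow_mono G hinv x _ _ hpm
      · exact ⟨p, hpF, h2⟩

lemma Fr_subset_toFinset (G : NValuedGroup 2 X) (x : X) (m : ℕ) :
    ∀ y ∈ Fr G x m, y ∈ G.spow x m := fun y hy => ((mem_Fr G x m y).mp hy).1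

lemma Fr_card_zero (G : NValuedGroup 2 X) (x : X) : (Fr G x 0).card ≤ 1 := by
  classical
  have h : Fr G x 0 ⊆ (G.spow x 0).toFinset := by
    intro y hy
    exact Multiset.mem_toFinset.mpr (Fr_subset_toFinset G x 0 y hy)
  calc (Fr G x 0).card ≤ (G.spow x 0).toFinset.card := Finset.card_le_card h
    _ ≤ Multiset.card (G.spow x 0) := Multiset.toFinset_card_le _
    _ = 1 := by simp [NValuedGroup.spow]

lemma Fr_card (G : NValuedGroup 2 X) (hinv : ∀ a : X, G.inv a = a) (x : X) :
    ∀ m, 1 ≤ m → (Fr G x m).card ≤ 2 * m := by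
  classical
  intro m
  induction m using Nat.strong_induction_on with
  | _ m IH =>
    intro hm1
    rcases eq_or_lt_of_le hm1 with h1 | h2
    · -- m = 1
      subst h1
      have h : Fr G x 1 ⊆ (G.spow x 1).toFinset := by
        intro y hy
        exact Multiset.mem_toFinset.mpr (Fr_subset_toFinset G x 1 y hy)
      calc (Fr G x 1).card ≤ (G.spow x 1).toFinset.card := Finset.card_le_card h
        _ ≤ Multiset.card (G.spow x 1) := Multiset.toFinset_card_le _
        _ = 2 := by
            show Multiset.card ((G.spow x 0).bind fun t => G.mul t x) = 2
            simp [NValuedGroup.spow, G.card_mul]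
    · -- m ≥ 2
      have hm2 : 2 ≤ m := h2
      set k := Nat.log 2 m with hk
      have hkpos : 1 ≤ k := Nat.log_pos one_lt_two hm2
      have hpowle : 2 ^ k ≤ m := Nat.pow_log_le_self 2 (by omega)
      have hltpow : m < 2 ^ (k + 1) := Nat.lt_pow_succ_log_self (by norm_num) m
      have hsucc : 2 ^ (k + 1) = 2 ^ k + 2 ^ k := by rw [pow_succ]; ring
      set m' := m - 2 ^ k with hm'
      have hsubset : Fr G x m ⊆
          (Fr G x m').biUnion (fun s => (G.mul s (useq G hinv x k)).toFinset) := by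
        intro y hy
        obtain ⟨s, hs, hys⟩ := frontier_step G hinv x k hkpos m hpowle y hy
        exact Finset.mem_biUnion.mpr ⟨s, hs, Multiset.mem_toFinset.mpr hys⟩
      have hcard : (Fr G x m).card ≤ (Fr G x m').card * 2 := by
        refine le_trans (Finset.card_le_card hsubset) ?_
        refine Finset.card_biUnion_le_card_mul _ _ 2 (fun s _ => ?_)
        calc ((G.mul s (useq G hinv x k)).toFinset).card
            ≤ Multiset.card (G.mul s (useq G hinv x k)) := Multiset.toFinset_card_le _
          _ = 2 := G.card_mul _ _
      rcases Nat.eq_zero_or_pos m' with hz | hpos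
      · rw [hz] at hcard
        have := Fr_card_zero G x
        omega
      · have hlt : m' < m := by
          have : 0 < 2 ^ k := Nat.pow_pos (by norm_num)
          omega
        have := IH m' hlt hpos
        omega

lemma sstar_subset_Fr (G : NValuedGroup 2 X) (x : X) (r : ℕ) (hr : 1 ≤ r) :
    G.Sstar x r ⊆ ↑(Fr G x (r - 1)) := by
  rintro y ⟨⟨i, hi, hyi⟩, hnot⟩
  have hir : i = r - 1 := by
    by_contra h
    exact hnot ⟨i, by omega, hyi⟩
  subst hir
  rw [Finset.mem_coe, mem_Fr]
  refine ⟨hyi, fun h2 hmem => ?_⟩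
  exact hnot ⟨r - 1 - 2, by omega, hmem⟩

end NValuedGroup

/-- In a 2-valued group with `inv = id`, the sphere `S*(x, r)` has cardinality strictly
less than `2r` for every `r ≥ 1`. -/
theorem two_valued_sstar_card_lt (G : NValuedGroup 2 X)
    (hinv : ∀ a : X, G.inv a = a) (x : X) :
    ∀ r : ℕ, 1 ≤ r → Nat.card (G.Sstar x r) < 2 * r := by
  intro r hr
  have hsub := NValuedGroup.sstar_subset_Fr G x r hr
  have hfin : (↑(NValuedGroup.Fr G x (r - 1)) : Set X).Finite := Finset.finite_toSet _
  have h1 : Nat.card (G.Sstar x r) ≤ (NValuedGroup.Fr G x (r - 1)).card := by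
    have h := Nat.card_mono hfin hsub
    have h2 : Nat.card (↑(NValuedGroup.Fr G x (r - 1)) : Set X)
        = (NValuedGroup.Fr G x (r - 1)).card := by
      simp [Nat.card_coe_set_eq, Set.ncard_coe_finset]
    omega
  rcases eq_or_lt_of_le hr with h | h
  · have := NValuedGroup.Fr_card_zero G x
    have hr1 : r - 1 = 0 := by omega
    rw [hr1] at h1
    omega
  · have := NValuedGroup.Fr_card G hinv x (r - 1) (by omega)
    omega
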